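/- Under the stated stochastic linear bandit setup with the LinIMED-2 arm-selection rule, there exist a constant c > 0 and T₀ ≥ 2 depending only on L, S, R and λ such that for every T ≥ T₀ and every free parameter Γ ∈ (0,1): F_2 ≤ T·Γ + c·(d·β_T·log T/Γ)·log(1 + L²·β_T·log T/(λ·Γ²)), where β_T := (R·√(d·log(T²·(1 + T·L²/λ))) + √λ·S)². -/

import Mathlib

open Matrix Finset
open scoped Classical

noncomputable section

/-- Euclidean norm of a vector in `ℝ^d`. -/
def enorm2 {d : ℕ} (v : Fin d → ℝ) : ℝ := Real.sqrt (v ⬝ᵥ v)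

/-- Mahalanobis norm `‖x‖_A = √(xᵀ A x)`. -/
def mnorm {d : ℕ} (A : Matrix (Fin d) (Fin d) ℝ) (v : Fin d → ℝ) : ℝ :=
  Real.sqrt (v ⬝ᵥ A.mulVec v)

/-- Confidence width `β_n(γ) = (R·√(d·log((1 + n·L²/λ)/γ)) + √λ·S)²`. -/
def betaConf (d : ℕ) (L S R lam : ℝ) (n : ℕ) (γ : ℝ) : ℝ :=
  (R * Real.sqrt (d * Real.log ((1 + (n : ℝ) * L ^ 2 / lam) / γ)) + Real.sqrt lam * S) ^ 2

/-- Stochastic linear bandit environment together with a trajectory generated by the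
LinIMED-2 algorithm. -/
structure LinIMED2 (d T : ℕ) (L S R lam : ℝ) : Type 1 where
  hd : 1 ≤ d
  hT : 2 ≤ T
  hL : 0 < L
  hS : 0 < S
  hR : 0 < R
  hlam : 0 < lam
  hlamS : 1 ≤ Real.sqrt lam * S
  /-- the type of arms -/
  Arm : Type
  [mArm : MeasurableSpace Arm]
  /-- the arm set available at each round -/
  arms : ℕ → Finset Arm
  arms_ne : ∀ t, (arms t).Nonempty
  /-- the context of each arm at each round -/
  ctx : ℕ → Arm → Fin d → ℝ
  ctx_bdd : ∀ t, 1 ≤ t → t ≤ T → ∀ a ∈ arms t, enorm2 (ctx t a) ≤ L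
  /-- the unknown parameter θ* -/
  θstar : Fin d → ℝ
  θstar_bdd : enorm2 θstar ≤ S
  /-- Assumption 1: all suboptimality gaps are at most 1 -/
  gap_bdd : ∀ t, 1 ≤ t → t ≤ T → ∀ b ∈ arms t,
    (arms t).sup' (arms_ne t) (fun a => θstar ⬝ᵥ ctx t a) - θstar ⬝ᵥ ctx t b ≤ 1
  /-- the sample space -/
  Ω : Type
  [mΩ : MeasurableSpace Ω]
  /-- the underlying probability measure -/
  P : MeasureTheory.Measure Ω
  [hP : MeasureTheory.IsProbabilityMeasure P]
  /-- the arm chosen at each round -/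
  act : ℕ → Ω → Arm
  act_mem : ∀ t, 1 ≤ t → t ≤ T → ∀ ω, act t ω ∈ arms t
  /-- the noise sequence -/
  noise : ℕ → Ω → ℝ
  /-- the observed reward `Y_t = ⟨θ*, X_t⟩ + η_t` -/
  rew : ℕ → Ω → ℝ
  hrew : ∀ t ω, rew t ω = θstar ⬝ᵥ ctx t (act t ω) + noise t ω
  /-- the chosen arm is a measurable function of `(A_1, Y_1, …, A_{t−1}, Y_{t−1})` -/
  act_pred : ∀ t, 1 ≤ t → t ≤ T →
    @Measurable Ω Arm
      (MeasurableSpace.comap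
        (fun ω => (fun s : Fin (t - 1) => act (s + 1) ω,
                   fun s : Fin (t - 1) => rew (s + 1) ω))
        inferInstance) mArm (act t)
  /-- the noise is conditionally `R`-sub-Gaussian given `(A_1, …, A_t, Y_1, …, Y_{t−1})` -/
  noise_subG : ∀ t, 1 ≤ t → t ≤ T → ∀ u : ℝ,
    ∀ᵐ ω ∂P,
      MeasureTheory.condExp
        (MeasurableSpace.comap
          (fun ω' => (fun s : Fin t => act (s + 1) ω',
                      fun s : Fin (t - 1) => rew (s + 1) ω'))
          inferInstance)
        P (fun ω' => Real.exp (u * noise t ω')) ω ≤ Real.exp (u ^ 2 * R ^ 2 / 2)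
  /-- the regularized Gram matrix `V_t` -/
  Vmat : ℕ → Ω → Matrix (Fin d) (Fin d) ℝ
  hV0 : ∀ ω, Vmat 0 ω = lam • (1 : Matrix (Fin d) (Fin d) ℝ)
  hVs : ∀ t ω, Vmat (t + 1) ω =
    Vmat t ω + Matrix.vecMulVec (ctx (t + 1) (act (t + 1) ω)) (ctx (t + 1) (act (t + 1) ω))
  /-- the vector `W_t` -/
  Wvec : ℕ → Ω → Fin d → ℝ
  hW0 : ∀ ω, Wvec 0 ω = 0
  hWs : ∀ t ω, Wvec (t + 1) ω = Wvec t ω + rew (t + 1) ω • ctx (t + 1) (act (t + 1) ω)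
  /-- the ridge estimate `θ̂_t = V_t⁻¹ W_t` -/
  that : ℕ → Ω → Fin d → ℝ
  hthat : ∀ t ω, that t ω = (Vmat t ω)⁻¹.mulVec (Wvec t ω)
  /-- the distinguished arm of round `t` (the arm maximizing the empirical mean μ̂_{t,·}, with an
  arbitrary tie-breaking rule) -/
  emp : ℕ → Ω → Arm
  emp_mem : ∀ t, 1 ≤ t → t ≤ T → ∀ ω, emp t ω ∈ arms t
  emp_max : ∀ t, 1 ≤ t → t ≤ T → ∀ ω, ∀ a ∈ arms t,
    that (t - 1) ω ⬝ᵥ ctx t a ≤ that (t - 1) ω ⬝ᵥ ctx t (emp t ω)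
  /-- the LinIMED-2 index of each arm -/
  idx : ℕ → Arm → Ω → ℝ
  hidx_emp : ∀ t, 1 ≤ t → t ≤ T → ∀ ω,
    idx t (emp t ω) ω =
      min (Real.log T)
        (- Real.log (betaConf d L S R lam (t - 1) (1 / (t : ℝ) ^ 2) * (ctx t (emp t ω) ⬝ᵥ (Vmat (t - 1) ω)⁻¹.mulVec (ctx t (emp t ω)))))
  hidx : ∀ t, 1 ≤ t → t ≤ T → ∀ ω, ∀ a ∈ arms t, a ≠ emp t ω →
    idx t a ω =
      ((arms t).sup' (arms_ne t) (fun j => that (t - 1) ω ⬝ᵥ ctx t j) - that (t - 1) ω ⬝ᵥ ctx t a) ^ 2 /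
          (betaConf d L S R lam (t - 1) (1 / (t : ℝ) ^ 2) * (ctx t a ⬝ᵥ (Vmat (t - 1) ω)⁻¹.mulVec (ctx t a))) -
        Real.log (betaConf d L S R lam (t - 1) (1 / (t : ℝ) ^ 2) * (ctx t a ⬝ᵥ (Vmat (t - 1) ω)⁻¹.mulVec (ctx t a)))
  /-- the algorithm plays an arm minimizing the index (ties broken arbitrarily) -/
  act_min : ∀ t, 1 ≤ t → t ≤ T → ∀ ω, ∀ a ∈ arms t, idx t (act t ω) ω ≤ idx t a ω

namespace LinIMED2

variable {d T : ℕ} {L S R lam : ℝ} (E : LinIMED2 d T L S R lam)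

/-- The largest expected reward at round `t`, `⟨θ*, x*_t⟩`. -/
def maxTrue (t : ℕ) : ℝ :=
  (E.arms t).sup' (E.arms_ne t) (fun a => E.θstar ⬝ᵥ E.ctx t a)

/-- The instantaneous regret `Δ_t = ⟨θ*, x*_t⟩ − ⟨θ*, X_t⟩`. -/
def gap (t : ℕ) (ω : E.Ω) : ℝ :=
  E.maxTrue t - E.θstar ⬝ᵥ E.ctx t (E.act t ω)

/-- The expected cumulative regret `R_T`. -/
def regret : ℝ := ∫ ω, (∑ t ∈ Finset.Icc 1 T, E.gap t ω) ∂E.P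

end LinIMED2

namespace LinIMED2

variable {d T : ℕ} {L S R lam : ℝ} (E : LinIMED2 d T L S R lam)

/-- The confidence event `B_t`. -/
def Bev (t : ℕ) : Set E.Ω :=
  {ω | mnorm (E.Vmat (t - 1) ω) (E.that (t - 1) ω - E.θstar) ≤
    Real.sqrt (betaConf d L S R lam (t - 1) (1 / (t : ℝ) ^ 2))}

/-- The event `C_t = {max_b ⟨θ̂_{t−1}, x_{t,b}⟩ > ⟨θ*, x*_t⟩ − δ_t}` with
`δ_t = Δ_t/√(log T)`. -/
def Cev (t : ℕ) : Set E.Ω :=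
  {ω | E.maxTrue t - E.gap t ω / Real.sqrt (Real.log T) <
    (E.arms t).sup' (E.arms_ne t) (fun b => E.that (t - 1) ω ⬝ᵥ E.ctx t b)}

/-- The event `D_t = {Δ̂_{t,A_t} ≥ ε_t}` with `ε_t = (1 − 2/√(log T))·Δ_t`. -/
def Dev (t : ℕ) : Set E.Ω :=
  {ω | (1 - 2 / Real.sqrt (Real.log T)) * E.gap t ω ≤
    (E.arms t).sup' (E.arms_ne t) (fun j => E.that (t - 1) ω ⬝ᵥ E.ctx t j) -
      E.that (t - 1) ω ⬝ᵥ E.ctx t (E.act t ω)}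

/-- `F₁ = E[Σ_t Δ_t·1{B_t ∩ C_t ∩ D_t}]`. -/
def F1 : ℝ :=
  ∫ ω, (∑ t ∈ Finset.Icc 1 T,
    E.gap t ω * Set.indicator (E.Bev t ∩ E.Cev t ∩ E.Dev t) (fun _ => (1 : ℝ)) ω) ∂E.P

/-- `F₂ = E[Σ_t Δ_t·1{B_t ∩ C_t ∩ D_tᶜ}]`. -/
def F2 : ℝ :=
  ∫ ω, (∑ t ∈ Finset.Icc 1 T,
    E.gap t ω * Set.indicator (E.Bev t ∩ E.Cev t ∩ (E.Dev t)ᶜ) (fun _ => (1 : ℝ)) ω) ∂E.P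

/-- `F₃ = E[Σ_t Δ_t·1{B_t ∩ C_tᶜ}]`. -/
def F3 : ℝ :=
  ∫ ω, (∑ t ∈ Finset.Icc 1 T,
    E.gap t ω * Set.indicator (E.Bev t ∩ (E.Cev t)ᶜ) (fun _ => (1 : ℝ)) ω) ∂E.P

/-- `F₄ = E[Σ_t Δ_t·1{B_tᶜ}]`. -/
def F4 : ℝ :=
  ∫ ω, (∑ t ∈ Finset.Icc 1 T,
    E.gap t ω * Set.indicator ((E.Bev t)ᶜ) (fun _ => (1 : ℝ)) ω) ∂E.P

end LinIMED2

/-- `β_T = (R·√(d·log(T²·(1 + T·L²/λ))) + √λ·S)²`. -/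
def betaT (d T : ℕ) (L S R lam : ℝ) : ℝ :=
  (R * Real.sqrt (d * Real.log ((T : ℝ) ^ 2 * (1 + (T : ℝ) * L ^ 2 / lam))) +
    Real.sqrt lam * S) ^ 2

namespace LinHelp

variable {d : ℕ}

lemma dot_symm (A : Matrix (Fin d) (Fin d) ℝ) (hA : A.IsHermitian) (u v : Fin d → ℝ) :
    u ⬝ᵥ A *ᵥ v = v ⬝ᵥ A *ᵥ u := by
  have h : Aᵀ = A := by
    have := hA; rwa [Matrix.IsHermitian, conjTranspose_eq_transpose_of_trivial] at this
  rw [Matrix.dotProduct_mulVec, ← Matrix.mulVec_transpose, h, dotProduct_comm]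

lemma psd_nonneg {A : Matrix (Fin d) (Fin d) ℝ} (hA : A.PosSemidef) (x : Fin d → ℝ) :
    0 ≤ x ⬝ᵥ A *ᵥ x := by simpa using hA.dotProduct_mulVec_nonneg x

lemma psd_cs {A : Matrix (Fin d) (Fin d) ℝ} (hA : A.PosSemidef) (u v : Fin d → ℝ) :
    (u ⬝ᵥ A *ᵥ v) ^ 2 ≤ (u ⬝ᵥ A *ᵥ u) * (v ⬝ᵥ A *ᵥ v) := by
  have key : ∀ x : ℝ, 0 ≤ (v ⬝ᵥ A *ᵥ v) * (x * x) + (2 * (u ⬝ᵥ A *ᵥ v)) * x + (u ⬝ᵥ A *ᵥ u) := by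
    intro x
    have h0 : 0 ≤ (u + x • v) ⬝ᵥ A *ᵥ (u + x • v) := psd_nonneg hA _
    have hsymm := dot_symm A hA.1 u v
    have hexp : (u + x • v) ⬝ᵥ A *ᵥ (u + x • v)
        = (v ⬝ᵥ A *ᵥ v) * (x * x) + (2 * (u ⬝ᵥ A *ᵥ v)) * x + (u ⬝ᵥ A *ᵥ u) := by
      simp only [Matrix.mulVec_add, Matrix.mulVec_smul, add_dotProduct, smul_dotProduct,
        dotProduct_add, dotProduct_smul, smul_eq_mul]
      rw [← hsymm]; ring
    rw [hexp] at h0; exact h0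
  have hd := discrim_le_zero key
  rw [discrim] at hd
  nlinarith [hd]


lemma pd_cancel {A : Matrix (Fin d) (Fin d) ℝ} (hA : A.PosDef) (x : Fin d → ℝ) :
    A *ᵥ (A⁻¹ *ᵥ x) = x := by
  rw [Matrix.mulVec_mulVec, Matrix.mul_nonsing_inv _ (Matrix.isUnit_iff_isUnit_det _ |>.mp hA.isUnit), one_mulVec]

lemma inv_quad_eq {A : Matrix (Fin d) (Fin d) ℝ} (hA : A.PosDef) (x : Fin d → ℝ) :
    x ⬝ᵥ A⁻¹ *ᵥ x = (A⁻¹ *ᵥ x) ⬝ᵥ A *ᵥ (A⁻¹ *ᵥ x) := by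
  conv_rhs => rw [pd_cancel hA x]
  rw [dotProduct_comm]

lemma inv_quad_nonneg {A : Matrix (Fin d) (Fin d) ℝ} (hA : A.PosDef) (x : Fin d → ℝ) :
    0 ≤ x ⬝ᵥ A⁻¹ *ᵥ x := psd_nonneg hA.inv.posSemidef x

lemma inv_quad_antitone {A B : Matrix (Fin d) (Fin d) ℝ} (hA : A.PosDef) (hB : B.PosDef)
    (hAB : (B - A).PosSemidef) (x : Fin d → ℝ) :
    x ⬝ᵥ B⁻¹ *ᵥ x ≤ x ⬝ᵥ A⁻¹ *ᵥ x := by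
  set y := B⁻¹ *ᵥ x with hy
  have hs : x ⬝ᵥ B⁻¹ *ᵥ x = y ⬝ᵥ B *ᵥ y := inv_quad_eq hB x
  set s := x ⬝ᵥ B⁻¹ *ᵥ x with hsdef
  have hs0 : 0 ≤ s := inv_quad_nonneg hB x
  rcases eq_or_lt_of_le hs0 with h0 | hpos
  · rw [← h0]; exact inv_quad_nonneg hA x
  · have hcs := psd_cs hA.posSemidef y (A⁻¹ *ᵥ x)
    have h1 : y ⬝ᵥ A *ᵥ (A⁻¹ *ᵥ x) = s := by
      rw [pd_cancel hA x, hy, dotProduct_comm]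
    have h2 : (A⁻¹ *ᵥ x) ⬝ᵥ A *ᵥ (A⁻¹ *ᵥ x) = x ⬝ᵥ A⁻¹ *ᵥ x := (inv_quad_eq hA x).symm
    have h3 : y ⬝ᵥ A *ᵥ y ≤ y ⬝ᵥ B *ᵥ y := by
      have h6 := psd_nonneg hAB y
      have hexp : y ⬝ᵥ (B - A) *ᵥ y = y ⬝ᵥ B *ᵥ y - y ⬝ᵥ A *ᵥ y := by
        rw [Matrix.sub_mulVec, dotProduct_sub]
      linarith [hexp ▸ h6]
    rw [h1, h2] at hcs
    have h4 : y ⬝ᵥ A *ᵥ y ≤ s := le_of_le_of_eq h3 hs.symm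
    have hQ0 : 0 ≤ x ⬝ᵥ A⁻¹ *ᵥ x := inv_quad_nonneg hA x
    have h5 : 0 ≤ y ⬝ᵥ A *ᵥ y := psd_nonneg hA.posSemidef y
    nlinarith

lemma cs_conf {V : Matrix (Fin d) (Fin d) ℝ} (hV : V.PosDef) (u x : Fin d → ℝ) :
    u ⬝ᵥ x ≤ Real.sqrt (u ⬝ᵥ V *ᵥ u) * Real.sqrt (x ⬝ᵥ V⁻¹ *ᵥ x) := by
  have hcs := psd_cs hV.posSemidef u (V⁻¹ *ᵥ x)
  have h1 : u ⬝ᵥ V *ᵥ (V⁻¹ *ᵥ x) = u ⬝ᵥ x := by rw [pd_cancel hV]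
  have h2 : (V⁻¹ *ᵥ x) ⬝ᵥ V *ᵥ (V⁻¹ *ᵥ x) = x ⬝ᵥ V⁻¹ *ᵥ x := (inv_quad_eq hV x).symm
  rw [h1, h2] at hcs
  have h3 : u ⬝ᵥ x ≤ |u ⬝ᵥ x| := le_abs_self _
  have h4 : |u ⬝ᵥ x| ≤ Real.sqrt (u ⬝ᵥ V *ᵥ u) * Real.sqrt (x ⬝ᵥ V⁻¹ *ᵥ x) := by
    rw [← Real.sqrt_mul_self (abs_nonneg (u ⬝ᵥ x)), ← Real.sqrt_mul (psd_nonneg hV.posSemidef u)]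
    apply Real.sqrt_le_sqrt
    calc |u ⬝ᵥ x| * |u ⬝ᵥ x| = (u ⬝ᵥ x) ^ 2 := by rw [← abs_mul, ← sq, abs_sq]
      _ ≤ _ := hcs
  linarith

lemma det_rank_one_update {A : Matrix (Fin d) (Fin d) ℝ} (hA : A.PosDef) (x : Fin d → ℝ) :
    (A + vecMulVec x x).det = A.det * (1 + x ⬝ᵥ A⁻¹ *ᵥ x) := by
  have hu : IsUnit A.det := Matrix.isUnit_iff_isUnit_det _ |>.mp hA.isUnit
  rw [vecMulVec_eq Unit, Matrix.det_add_replicateCol_mul_replicateRow hu]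
  congr 1
  rw [det_unique]
  rw [Matrix.mul_assoc, ← Matrix.replicateCol_mulVec, Matrix.add_apply,
    Matrix.one_apply_eq, Matrix.replicateRow_mul_replicateCol_apply]


variable {d : ℕ}

lemma psd_vecMulVec (x : Fin d → ℝ) : (vecMulVec x x).PosSemidef := by
  have h : vecMulVec x x = replicateCol Unit x * (replicateCol Unit x)ᴴ := by
    rw [vecMulVec_eq Unit, conjTranspose_replicateCol]
    congr 1
  rw [h]; exact posSemidef_self_mul_conjTranspose _

lemma psd_sum {ι : Type*} (s : Finset ι) (f : ι → Matrix (Fin d) (Fin d) ℝ)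
    (hf : ∀ i ∈ s, (f i).PosSemidef) : (∑ i ∈ s, f i).PosSemidef :=
  Finset.sum_induction f _ (fun _ _ ha hb => ha.add hb) Matrix.PosSemidef.zero hf

lemma smul_one_posdef {lam : ℝ} (hlam : 0 < lam) :
    (lam • (1 : Matrix (Fin d) (Fin d) ℝ)).PosDef := by
  rw [smul_one_eq_diagonal]
  exact Matrix.PosDef.diagonal fun _ => hlam

lemma min_one_le_two_log {u : ℝ} (hu : 0 ≤ u) : min 1 u ≤ 2 * Real.log (1 + u) := by
  rcases le_total 1 u with h | h
  · rw [min_eq_left h]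
    have h2 : Real.log 2 ≤ Real.log (1 + u) := by
      apply Real.log_le_log (by norm_num); linarith
    nlinarith [Real.log_two_gt_d9]
  · rw [min_eq_right h]
    have hpos : (0:ℝ) < 1 + u := by linarith
    have hl : Real.log ((1+u)⁻¹) ≤ (1+u)⁻¹ - 1 :=
      Real.log_le_sub_one_of_pos (by positivity)
    rw [Real.log_inv] at hl
    have hinv : (1+u) * (1+u)⁻¹ = 1 := mul_inv_cancel₀ (ne_of_gt hpos)
    nlinarith [hl, hinv]

variable {lam L : ℝ} (xs : ℕ → Fin d → ℝ)

/-- the Gram matrix of the first `k` vectors -/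
def gram (lam : ℝ) (xs : ℕ → Fin d → ℝ) (k : ℕ) : Matrix (Fin d) (Fin d) ℝ :=
  lam • (1 : Matrix (Fin d) (Fin d) ℝ) + ∑ i ∈ range k, vecMulVec (xs i) (xs i)

lemma gram_posdef (hlam : 0 < lam) (k : ℕ) : (gram lam xs k).PosDef :=
  (smul_one_posdef hlam).add_posSemidef
    (psd_sum _ _ fun i _ => psd_vecMulVec (xs i))

lemma gram_succ (k : ℕ) :
    gram lam xs (k+1) = gram lam xs k + vecMulVec (xs k) (xs k) := by
  rw [gram, gram, sum_range_succ, add_assoc]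


lemma det_gram_prod (hlam : 0 < lam) (n : ℕ) :
    (gram lam xs n).det =
      lam ^ d * ∏ i ∈ range n, (1 + xs i ⬝ᵥ (gram lam xs i)⁻¹ *ᵥ xs i) := by
  induction n with
  | zero =>
      simp [gram, Matrix.det_smul]
  | succ n ih =>
      rw [gram_succ, det_rank_one_update (gram_posdef xs hlam n), ih, prod_range_succ, mul_assoc]

lemma entry_abs_le (hL : 0 ≤ L) (hx : ∀ i, xs i ⬝ᵥ xs i ≤ L ^ 2) (n : ℕ) (i j : Fin d) :
    |gram lam xs n i j| ≤ |lam| + n * L ^ 2 := by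
  have habs : ∀ k (i : Fin d), |xs k i| ≤ L := by
    intro k i
    have h1 : xs k i ^ 2 ≤ L ^ 2 := by
      have : xs k i ^ 2 ≤ xs k ⬝ᵥ xs k := by
        have := Finset.single_le_sum (f := fun j => xs k j * xs k j)
          (fun j _ => mul_self_nonneg _) (Finset.mem_univ i)
        simpa [dotProduct, sq] using this
      linarith [hx k]
    nlinarith [abs_nonneg (xs k i), sq_abs (xs k i)]
  have h1 : |(lam • (1 : Matrix (Fin d) (Fin d) ℝ)) i j| ≤ |lam| := by
    rcases eq_or_ne i j with rfl | hij
    · simp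
    · simp [Matrix.one_apply_ne hij]
  have h2 : |(∑ k ∈ range n, vecMulVec (xs k) (xs k)) i j| ≤ n * L ^ 2 := by
    rw [Matrix.sum_apply]
    calc |∑ k ∈ range n, vecMulVec (xs k) (xs k) i j|
        ≤ ∑ k ∈ range n, |vecMulVec (xs k) (xs k) i j| := Finset.abs_sum_le_sum_abs _ _
      _ ≤ ∑ k ∈ range n, L ^ 2 := by
          apply Finset.sum_le_sum
          intro k _
          rw [Matrix.vecMulVec_apply, abs_mul, sq]
          exact mul_le_mul (habs k i) (habs k j) (abs_nonneg _) hL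
      _ = n * L ^ 2 := by rw [sum_const, card_range, nsmul_eq_mul]
  calc |gram lam xs n i j| ≤ _ := by
        rw [gram, Matrix.add_apply]; exact abs_add_le _ _
    _ ≤ |lam| + n * L ^ 2 := add_le_add h1 h2

lemma det_gram_le (hlam : 0 < lam) (hL : 0 ≤ L) (hx : ∀ i, xs i ⬝ᵥ xs i ≤ L ^ 2) (n : ℕ) :
    (gram lam xs n).det ≤ (d.factorial : ℝ) * (lam + n * L ^ 2) ^ d := by
  have h := Matrix.det_le (A := gram lam xs n) (abv := AbsoluteValue.abs)
    (x := lam + n * L ^ 2) (fun i j => by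
      simpa [abs_of_pos hlam] using entry_abs_le (lam := lam) xs hL hx n i j)
  simp only [Fintype.card_fin, nsmul_eq_mul] at h
  calc (gram lam xs n).det ≤ |(gram lam xs n).det| := le_abs_self _
    _ ≤ _ := h

/-- **Elliptical potential lemma.** -/
lemma ellip (hd : 1 ≤ d) (hlam : 0 < lam) (hL : 0 ≤ L)
    (hx : ∀ i, xs i ⬝ᵥ xs i ≤ L ^ 2) (n : ℕ) :
    ∑ i ∈ range n, min 1 (xs i ⬝ᵥ (gram lam xs i)⁻¹ *ᵥ xs i) ≤
      2 * d * Real.log d + 2 * d * Real.log (1 + n * L ^ 2 / lam) := by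
  set u : ℕ → ℝ := fun i => xs i ⬝ᵥ (gram lam xs i)⁻¹ *ᵥ xs i with hu
  have hu0 : ∀ i, 0 ≤ u i := fun i => inv_quad_nonneg (gram_posdef xs hlam i) _
  have step1 : ∑ i ∈ range n, min 1 (u i) ≤ 2 * ∑ i ∈ range n, Real.log (1 + u i) := by
    rw [Finset.mul_sum]
    exact Finset.sum_le_sum fun i _ => min_one_le_two_log (hu0 i)
  have step2 : ∑ i ∈ range n, Real.log (1 + u i) =
      Real.log (∏ i ∈ range n, (1 + u i)) := by
    rw [Real.log_prod]
    intro i _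
    have := hu0 i; positivity
  have hprodpos : (0:ℝ) < ∏ i ∈ range n, (1 + u i) :=
    Finset.prod_pos fun i _ => by have := hu0 i; linarith
  have step3 : ∏ i ∈ range n, (1 + u i) = (gram lam xs n).det / lam ^ d := by
    rw [det_gram_prod xs hlam n, mul_comm, mul_div_assoc, div_self (by positivity : (lam:ℝ) ^ d ≠ 0), mul_one]
  have step4 : (gram lam xs n).det / lam ^ d ≤
      (d.factorial : ℝ) * (1 + n * L ^ 2 / lam) ^ d := by
    rw [div_le_iff₀ (by positivity)]
    calc (gram lam xs n).det ≤ (d.factorial : ℝ) * (lam + n * L ^ 2) ^ d :=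
          det_gram_le xs hlam hL hx n
      _ = (d.factorial : ℝ) * (1 + n * L ^ 2 / lam) ^ d * lam ^ d := by
          rw [mul_assoc, ← mul_pow]
          congr 2
          field_simp
  have step5 : Real.log (∏ i ∈ range n, (1 + u i)) ≤
      Real.log ((d.factorial : ℝ) * (1 + n * L ^ 2 / lam) ^ d) := by
    apply Real.log_le_log hprodpos
    rw [step3]; exact step4
  have hfac : (0:ℝ) < d.factorial := by positivity
  have h1n : (0:ℝ) < 1 + n * L ^ 2 / lam := by positivity
  have step6 : Real.log ((d.factorial : ℝ) * (1 + n * L ^ 2 / lam) ^ d) =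
      Real.log (d.factorial : ℝ) + d * Real.log (1 + n * L ^ 2 / lam) := by
    rw [Real.log_mul (ne_of_gt hfac) (by positivity), Real.log_pow]
  have step7 : Real.log (d.factorial : ℝ) ≤ d * Real.log d := by
    calc Real.log (d.factorial : ℝ) ≤ Real.log ((d:ℝ) ^ d) := by
          apply Real.log_le_log hfac
          exact_mod_cast Nat.factorial_le_pow d
      _ = d * Real.log d := Real.log_pow d d
  calc ∑ i ∈ range n, min 1 (u i) ≤ 2 * ∑ i ∈ range n, Real.log (1 + u i) := step1
    _ = 2 * Real.log (∏ i ∈ range n, (1 + u i)) := by rw [step2]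
    _ ≤ 2 * (Real.log (d.factorial : ℝ) + d * Real.log (1 + n * L ^ 2 / lam)) := by
        rw [← step6]; linarith [step5]
    _ ≤ 2 * d * Real.log d + 2 * d * Real.log (1 + n * L ^ 2 / lam) := by
        linarith [step7]



def Cone (L R lam : ℝ) : ℝ :=
  6 + (4 * Real.log (1 + lam / (L ^ 2 * R ^ 2)) + 2 * Real.log 2) /
    Real.log (1 + 2 * L ^ 2 * R ^ 2 / lam)

lemma Cone_pos {L R lam : ℝ} (hL : 0 < L) (hR : 0 < R) (hlam : 0 < lam) :
    0 < Cone L R lam := by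
  have h1 : 0 < Real.log (1 + 2 * L ^ 2 * R ^ 2 / lam) := by
    apply Real.log_pos; nlinarith [div_pos (by positivity : (0:ℝ) < 2 * L^2 * R^2) hlam]
  have h2 : 0 ≤ Real.log (1 + lam / (L ^ 2 * R ^ 2)) := by
    apply Real.log_nonneg; nlinarith [div_nonneg hlam.le (by positivity : (0:ℝ) ≤ L^2*R^2)]
  have h3 : 0 ≤ Real.log 2 := Real.log_nonneg (by norm_num)
  have h4 : 0 ≤ (4 * Real.log (1 + lam / (L ^ 2 * R ^ 2)) + 2 * Real.log 2) /
      Real.log (1 + 2 * L ^ 2 * R ^ 2 / lam) := by positivity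
  unfold Cone; linarith

lemma log_one_add_mul_le {a b : ℝ} (ha : 0 ≤ a) (hb : 0 ≤ b) :
    Real.log (1 + a * b) ≤ Real.log (1 + a) + Real.log (1 + b) := by
  rw [← Real.log_mul (by linarith) (by linarith)]
  apply Real.log_le_log (by nlinarith)
  nlinarith

lemma log_one_add_le_half {p : ℝ} (hp : 0 ≤ p) :
    Real.log (1 + p) ≤ Real.log 2 + p / 2 := by
  have h := Real.log_le_sub_one_of_pos (show (0:ℝ) < (1 + p) / 2 by linarith)
  rw [Real.log_div (by linarith) two_ne_zero] at h
  linarith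

set_option maxHeartbeats 1600000 in
lemma arith (L R lam : ℝ) (hL : 0 < L) (hR : 0 < R) (hlam : 0 < lam)
    (d n : ℕ) (hd : 1 ≤ d) (β lgT Γ : ℝ)
    (hlgT : 1 ≤ lgT) (hβd : 2 * R ^ 2 * d * lgT ≤ β)
    (hΓ0 : 0 < Γ) (hΓ1 : Γ < 1)
    (hself : n * (Γ ^ 2 / (β * lgT)) ≤
      2 * d * Real.log d + 2 * d * Real.log (1 + n * L ^ 2 / lam)) :
    2 * d * Real.log d + 2 * d * Real.log (1 + n * L ^ 2 / lam) ≤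
      2 * Cone L R lam * (d * Real.log (1 + L ^ 2 * β * lgT / (lam * Γ ^ 2))) := by
  have hd1 : (1:ℝ) ≤ d := by exact_mod_cast hd
  have hdpos : (0:ℝ) < d := by linarith
  have hlgT0 : (0:ℝ) < lgT := by linarith
  have hβpos : 0 < β := by
    have h := mul_pos (mul_pos (by positivity : (0:ℝ) < 2 * R ^ 2) hdpos) hlgT0
    linarith
  have hβlgT : 0 < β * lgT := mul_pos hβpos hlgT0
  have hΓ2 : Γ ^ 2 ≤ 1 := by nlinarith
  have h2 : 2 * R ^ 2 * d ≤ β * lgT := by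
    have ha : 2 * R ^ 2 * (d:ℝ) ≤ 2 * R ^ 2 * d * lgT :=
      le_mul_of_one_le_right (by positivity) hlgT
    have hb : β ≤ β * lgT := le_mul_of_one_le_right hβpos.le hlgT
    linarith
  set z := L ^ 2 * β * lgT / (lam * Γ ^ 2) with hz
  have hzpos : 0 < z := by positivity
  set p := Real.log d + Real.log (1 + n * L ^ 2 / lam) with hp
  have hlogd0 : 0 ≤ Real.log d := Real.log_nonneg hd1
  have hlognn : 0 ≤ Real.log (1 + n * L ^ 2 / lam) :=
    Real.log_nonneg (by nlinarith [(by positivity : (0:ℝ) ≤ (n:ℝ) * L ^ 2 / lam)])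
  have hp0 : 0 ≤ p := by rw [hp]; linarith
  have hzd : 2 * L ^ 2 * R ^ 2 / lam * d ≤ z := by
    rw [hz, div_mul_eq_mul_div, div_le_div_iff₀ hlam (by positivity)]
    have ha := mul_le_mul_of_nonneg_left h2 (by positivity : (0:ℝ) ≤ L ^ 2 * lam)
    have hb := mul_le_mul_of_nonneg_left hΓ2
      (by positivity : (0:ℝ) ≤ 2 * L ^ 2 * R ^ 2 * d * lam)
    nlinarith [ha, hb]
  have hzm : 2 * L ^ 2 * R ^ 2 / lam ≤ z := by
    refine le_trans ?_ hzd
    nlinarith [hd1, (by positivity : (0:ℝ) < 2 * L ^ 2 * R ^ 2 / lam)]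
  have h2d : 2 * (d:ℝ) ≤ lam / (L ^ 2 * R ^ 2) * z := by
    have hq : (0:ℝ) ≤ lam / (L ^ 2 * R ^ 2) := by positivity
    have heq : lam / (L ^ 2 * R ^ 2) * (2 * L ^ 2 * R ^ 2 / lam * d) = 2 * d := by
      field_simp
    calc 2 * (d:ℝ) = lam / (L ^ 2 * R ^ 2) * (2 * L ^ 2 * R ^ 2 / lam * d) := heq.symm
      _ ≤ lam / (L ^ 2 * R ^ 2) * z := mul_le_mul_of_nonneg_left hzd hq
  -- key self-bounding step
  have hnz : (n:ℝ) * L ^ 2 / lam = (n * (Γ ^ 2 / (β * lgT))) * z := by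
    rw [hz]; field_simp
  have hnle : (n:ℝ) * L ^ 2 / lam ≤ 2 * d * p * z := by
    rw [hnz]
    apply mul_le_mul_of_nonneg_right _ hzpos.le
    calc (n:ℝ) * (Γ ^ 2 / (β * lgT)) ≤ _ := hself
      _ = 2 * d * p := by rw [hp]; ring
  have hstep : Real.log (1 + (n:ℝ) * L ^ 2 / lam) ≤ Real.log (1 + 2 * d * p * z) :=
    Real.log_le_log (by nlinarith [(by positivity : (0:ℝ) ≤ (n:ℝ) * L ^ 2 / lam)]) (by linarith)
  have hsplit : Real.log (1 + 2 * (d:ℝ) * p * z) ≤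
      Real.log (1 + 2 * d) + Real.log (1 + p) + Real.log (1 + z) := by
    have h1 : Real.log (1 + 2 * (d:ℝ) * p * z) ≤
        Real.log (1 + 2 * d) + Real.log (1 + p * z) := by
      have := log_one_add_mul_le (a := 2 * (d:ℝ)) (b := p * z)
        (by positivity) (by positivity)
      calc Real.log (1 + 2 * (d:ℝ) * p * z) = Real.log (1 + 2 * d * (p * z)) := by ring_nf
        _ ≤ _ := this
    have h2' : Real.log (1 + p * z) ≤ Real.log (1 + p) + Real.log (1 + z) :=
      log_one_add_mul_le hp0 hzpos.le
    linarith
  have hlogd_le : Real.log (d:ℝ) ≤ Real.log (1 + 2 * d) :=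
    Real.log_le_log hdpos (by linarith)
  have h2dlog : Real.log (1 + 2 * (d:ℝ)) ≤
      Real.log (1 + lam / (L ^ 2 * R ^ 2)) + Real.log (1 + z) := by
    calc Real.log (1 + 2 * (d:ℝ)) ≤ Real.log (1 + lam / (L ^ 2 * R ^ 2) * z) :=
          Real.log_le_log (by positivity) (by linarith)
      _ ≤ _ := log_one_add_mul_le (by positivity) hzpos.le
  have hhalf : Real.log (1 + p) ≤ Real.log 2 + p / 2 := log_one_add_le_half hp0
  have hκ : Real.log (1 + 2 * L ^ 2 * R ^ 2 / lam) ≤ Real.log (1 + z) :=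
    Real.log_le_log (by positivity) (by linarith)
  have hκpos : 0 < Real.log (1 + 2 * L ^ 2 * R ^ 2 / lam) :=
    Real.log_pos (by nlinarith [(by positivity : (0:ℝ) < 2 * L ^ 2 * R ^ 2 / lam)])
  have hzlog0 : 0 ≤ Real.log (1 + z) := Real.log_nonneg (by linarith)
  -- combine: p ≤ 6 log(1+z) + (4 log(1+q) + 2 log 2)
  have hpbound : p ≤ 6 * Real.log (1 + z) +
      (4 * Real.log (1 + lam / (L ^ 2 * R ^ 2)) + 2 * Real.log 2) := by
    have hmain : p ≤ Real.log d + Real.log (1 + 2 * d) + Real.log (1 + p) + Real.log (1 + z) := by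
      rw [hp]; linarith [hstep, hsplit]
    have : p / 2 ≤ 2 * Real.log (1 + 2 * d) + Real.log 2 + Real.log (1 + z) := by
      linarith [hmain, hhalf, hlogd_le]
    linarith [h2dlog]
  -- absorb the constant into log(1+z)
  have habsorb : 4 * Real.log (1 + lam / (L ^ 2 * R ^ 2)) + 2 * Real.log 2 ≤
      (4 * Real.log (1 + lam / (L ^ 2 * R ^ 2)) + 2 * Real.log 2) /
        Real.log (1 + 2 * L ^ 2 * R ^ 2 / lam) * Real.log (1 + z) := by
    have hnum : 0 ≤ 4 * Real.log (1 + lam / (L ^ 2 * R ^ 2)) + 2 * Real.log 2 := by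
      have := Real.log_nonneg (show (1:ℝ) ≤ 1 + lam / (L ^ 2 * R ^ 2) by
        nlinarith [(by positivity : (0:ℝ) ≤ lam / (L ^ 2 * R ^ 2))])
      have := Real.log_nonneg (show (1:ℝ) ≤ 2 by norm_num)
      linarith
    rw [div_mul_eq_mul_div, le_div_iff₀ hκpos]
    exact mul_le_mul_of_nonneg_left hκ hnum
  have hfinal : p ≤ Cone L R lam * Real.log (1 + z) := by
    have hexp : Cone L R lam * Real.log (1 + z) = 6 * Real.log (1 + z) +
        (4 * Real.log (1 + lam / (L ^ 2 * R ^ 2)) + 2 * Real.log 2) /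
          Real.log (1 + 2 * L ^ 2 * R ^ 2 / lam) * Real.log (1 + z) := by
      rw [Cone]; ring
    rw [hexp]; linarith [hpbound, habsorb]
  calc 2 * (d:ℝ) * Real.log d + 2 * d * Real.log (1 + n * L ^ 2 / lam)
      = 2 * d * p := by rw [hp]; ring
    _ ≤ 2 * d * (Cone L R lam * Real.log (1 + z)) := by
        apply mul_le_mul_of_nonneg_left hfinal (by positivity)
    _ = 2 * Cone L R lam * (d * Real.log (1 + z)) := by ring


lemma dot_self_nonneg {d : ℕ} (v : Fin d → ℝ) : 0 ≤ v ⬝ᵥ v :=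
  Finset.sum_nonneg fun i _ => mul_self_nonneg _

end LinHelp

section BetaLemmas
namespace LinHelp

lemma betaConf_le_betaT {d T : ℕ} {L S R lam : ℝ} (hL : 0 < L) (hS : 0 < S) (hR : 0 < R)
    (hlam : 0 < lam) {t : ℕ} (ht1 : 1 ≤ t) (htT : t ≤ T) :
    betaConf d L S R lam (t - 1) (1 / (t:ℝ) ^ 2) ≤ betaT d T L S R lam := by
  unfold betaConf betaT
  have htpos : (0:ℝ) < t := by exact_mod_cast ht1
  have hTpos : (0:ℝ) < T := lt_of_lt_of_le htpos (by exact_mod_cast htT)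
  have ha : (1 + ((t-1:ℕ):ℝ) * L ^ 2 / lam) / (1 / (t:ℝ) ^ 2) =
      (1 + ((t-1:ℕ):ℝ) * L ^ 2 / lam) * (t:ℝ) ^ 2 := by rw [one_div, div_inv_eq_mul]
  have h1 : ((t-1:ℕ):ℝ) ≤ (T:ℝ) := by exact_mod_cast le_trans (Nat.sub_le t 1) htT
  have h2 : (t:ℝ) ≤ T := by exact_mod_cast htT
  have h3 : (t:ℝ)^2 ≤ (T:ℝ)^2 := pow_le_pow_left₀ htpos.le h2 2
  have hnn : (0:ℝ) ≤ ((t-1:ℕ):ℝ) * L ^ 2 / lam := by positivity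
  have hnn2 : (0:ℝ) ≤ (T:ℝ) * L ^ 2 / lam := by positivity
  have hmono : (1 + ((t-1:ℕ):ℝ) * L^2/lam) * (t:ℝ)^2 ≤ (T:ℝ)^2 * (1 + (T:ℝ)*L^2/lam) := by
    have hA : 1 + ((t-1:ℕ):ℝ) * L^2/lam ≤ 1 + (T:ℝ)*L^2/lam := by
      have h := (div_le_div_iff_of_pos_right hlam).mpr (mul_le_mul_of_nonneg_right h1
        (by positivity : (0:ℝ) ≤ L^2))
      linarith
    nlinarith [sq_nonneg (t:ℝ), sq_nonneg (T:ℝ)]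
  have hlog : Real.log ((1 + ((t-1:ℕ):ℝ) * L ^ 2 / lam) / (1 / (t:ℝ) ^ 2)) ≤
      Real.log ((T:ℝ)^2 * (1 + (T:ℝ)*L^2/lam)) := by
    rw [ha]
    exact Real.log_le_log (by positivity) hmono
  have hs : Real.sqrt ((d:ℝ) * Real.log ((1 + ((t-1:ℕ):ℝ) * L ^ 2 / lam) / (1 / (t:ℝ) ^ 2))) ≤
      Real.sqrt ((d:ℝ) * Real.log ((T:ℝ)^2 * (1 + (T:ℝ)*L^2/lam))) :=
    Real.sqrt_le_sqrt (mul_le_mul_of_nonneg_left hlog (by positivity))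
  have hbase : R * Real.sqrt ((d:ℝ) * Real.log ((1 + ((t-1:ℕ):ℝ) * L ^ 2 / lam) / (1 / (t:ℝ) ^ 2)))
      + Real.sqrt lam * S ≤
      R * Real.sqrt ((d:ℝ) * Real.log ((T:ℝ)^2 * (1 + (T:ℝ)*L^2/lam))) + Real.sqrt lam * S :=
    add_le_add (mul_le_mul_of_nonneg_left hs hR.le) le_rfl
  exact pow_le_pow_left₀ (by positivity) hbase 2

lemma one_le_betaT {d T : ℕ} {L S R lam : ℝ} (hR : 0 ≤ R) (hlamS : 1 ≤ Real.sqrt lam * S) :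
    1 ≤ betaT d T L S R lam := by
  unfold betaT
  nlinarith [Real.sqrt_nonneg ((d:ℝ) * Real.log ((T:ℝ)^2 * (1 + (T:ℝ)*L^2/lam))),
    mul_nonneg hR (Real.sqrt_nonneg ((d:ℝ) * Real.log ((T:ℝ)^2 * (1 + (T:ℝ)*L^2/lam))))]

lemma betaT_ge {d T : ℕ} {L S R lam : ℝ} (hL : 0 < L) (hlam : 0 < lam) (hR : 0 ≤ R)
    (hT : 1 ≤ T) (hlamS : 0 ≤ Real.sqrt lam * S) :
    2 * R ^ 2 * d * Real.log T ≤ betaT d T L S R lam := by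
  unfold betaT
  have hT1 : (1:ℝ) ≤ T := by exact_mod_cast hT
  have hq : (0:ℝ) ≤ (T:ℝ) * L ^ 2 / lam := by positivity
  have harg1 : (1:ℝ) ≤ (T:ℝ)^2 * (1 + (T:ℝ)*L^2/lam) := by nlinarith
  have hlogT2 : 2 * Real.log T ≤ Real.log ((T:ℝ)^2 * (1 + (T:ℝ)*L^2/lam)) := by
    calc 2 * Real.log T = Real.log ((T:ℝ)^2) := (Real.log_pow (T:ℝ) 2).symm
      _ ≤ _ := Real.log_le_log (by positivity) (by nlinarith)
  have hlogA0 : 0 ≤ Real.log ((T:ℝ)^2 * (1 + (T:ℝ)*L^2/lam)) := Real.log_nonneg harg1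
  have hlog0 : 0 ≤ Real.log T := Real.log_nonneg hT1
  have hsq : Real.sqrt ((d:ℝ) * Real.log ((T:ℝ)^2 * (1 + (T:ℝ)*L^2/lam))) ^ 2 =
      (d:ℝ) * Real.log ((T:ℝ)^2 * (1 + (T:ℝ)*L^2/lam)) :=
    Real.sq_sqrt (by positivity)
  have hmul := mul_le_mul_of_nonneg_left hlogT2 (by positivity : (0:ℝ) ≤ R^2 * d)
  nlinarith [mul_nonneg (mul_nonneg hR (Real.sqrt_nonneg ((d:ℝ) * Real.log ((T:ℝ)^2 * (1 + (T:ℝ)*L^2/lam))))) hlamS,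
    sq_nonneg (Real.sqrt lam * S)]

end LinHelp

end BetaLemmas

namespace LinIMED2

variable {d T : ℕ} {L S R lam : ℝ} (E : LinIMED2 d T L S R lam)

lemma Vmat_eq (ω : E.Ω) (m : ℕ) :
    E.Vmat m ω = lam • (1 : Matrix (Fin d) (Fin d) ℝ) +
      ∑ s ∈ Finset.Icc 1 m, vecMulVec (E.ctx s (E.act s ω)) (E.ctx s (E.act s ω)) := by
  induction m with
  | zero => simp [E.hV0]
  | succ m ih =>
      rw [E.hVs, ih, Finset.sum_Icc_succ_top (Nat.succ_le_succ (Nat.zero_le m)), add_assoc]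

lemma Vmat_posdef (ω : E.Ω) (m : ℕ) : (E.Vmat m ω).PosDef := by
  rw [E.Vmat_eq ω m]
  exact (LinHelp.smul_one_posdef E.hlam).add_posSemidef
    (LinHelp.psd_sum _ _ fun s _ => LinHelp.psd_vecMulVec _)

lemma ctx_act_sq {t : ℕ} (ht1 : 1 ≤ t) (htT : t ≤ T) (ω : E.Ω) :
    E.ctx t (E.act t ω) ⬝ᵥ E.ctx t (E.act t ω) ≤ L ^ 2 := by
  have h := E.ctx_bdd t ht1 htT _ (E.act_mem t ht1 htT ω)
  rw [enorm2] at h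
  have h0 : 0 ≤ E.ctx t (E.act t ω) ⬝ᵥ E.ctx t (E.act t ω) := LinHelp.dot_self_nonneg _
  calc E.ctx t (E.act t ω) ⬝ᵥ E.ctx t (E.act t ω)
      = Real.sqrt (E.ctx t (E.act t ω) ⬝ᵥ E.ctx t (E.act t ω)) ^ 2 := (Real.sq_sqrt h0).symm
    _ ≤ L ^ 2 := pow_le_pow_left₀ (Real.sqrt_nonneg _) h 2

lemma gap_nonneg' {t : ℕ} (ht1 : 1 ≤ t) (htT : t ≤ T) (ω : E.Ω) : 0 ≤ E.gap t ω := by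
  have h := Finset.le_sup' (fun a => E.θstar ⬝ᵥ E.ctx t a) (E.act_mem t ht1 htT ω)
  simp only [gap, maxTrue]
  linarith

lemma gap_le_one' {t : ℕ} (ht1 : 1 ≤ t) (htT : t ≤ T) (ω : E.Ω) : E.gap t ω ≤ 1 := by
  have h := E.gap_bdd t ht1 htT _ (E.act_mem t ht1 htT ω)
  simp only [gap, maxTrue]
  exact h

lemma one_le_logT {T : ℕ} (hT3 : 3 ≤ T) : 1 ≤ Real.log T := by
  have h3 : (3:ℝ) ≤ T := by exact_mod_cast hT3
  have h1 : Real.exp 1 ≤ (T:ℝ) := by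
    have := Real.exp_one_lt_d9
    linarith
  exact (Real.le_log_iff_exp_le (by linarith)).mpr h1

/-- Core single-round estimate on the event `B ∩ C ∩ Dᶜ`. -/
lemma round_core (hT3 : 3 ≤ T) {t : ℕ} (ht1 : 1 ≤ t) (htT : t ≤ T) {ω : E.Ω}
    (hω : ω ∈ E.Bev t ∩ E.Cev t ∩ (E.Dev t)ᶜ) :
    E.gap t ω ^ 2 < betaT d T L S R lam * Real.log T *
      (E.ctx t (E.act t ω) ⬝ᵥ (E.Vmat (t-1) ω)⁻¹ *ᵥ E.ctx t (E.act t ω)) := by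
  obtain ⟨⟨hB, hC⟩, hD⟩ := hω
  simp only [Bev, Set.mem_setOf_eq] at hB
  simp only [Cev, Set.mem_setOf_eq] at hC
  simp only [Dev, Set.mem_compl_iff, Set.mem_setOf_eq, not_le] at hD
  set x := E.ctx t (E.act t ω) with hx
  set θd := E.that (t-1) ω - E.θstar with hθd
  set a := E.gap t ω with hadef
  set s := Real.sqrt (Real.log T) with hsdef
  have hlgT : 1 ≤ Real.log T := one_le_logT hT3
  have hs1 : 1 ≤ s := by rw [hsdef, show (1:ℝ) = Real.sqrt 1 by simp]; exact Real.sqrt_le_sqrt hlgT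
  have hs : 0 < s := by linarith
  have ha0 : 0 ≤ a := E.gap_nonneg' ht1 htT ω
  set sup := (E.arms t).sup' (E.arms_ne t) (fun b => E.that (t - 1) ω ⬝ᵥ E.ctx t b) with hsup
  -- from C and Dᶜ
  have hrw : (1 - 2 / s) * a = a - 2 * (a / s) := by ring
  have hgapdef : E.θstar ⬝ᵥ x = E.maxTrue t - a := by rw [hadef, gap]; ring
  have hkey : a / s < θd ⬝ᵥ x := by
    have h1 : E.that (t-1) ω ⬝ᵥ x - E.θstar ⬝ᵥ x > a / s := by
      rw [hgapdef]; linarith [hC, hD, hrw]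
    rw [hθd, sub_dotProduct]
    linarith
  set V := E.Vmat (t-1) ω with hV
  have hVpd : V.PosDef := E.Vmat_posdef ω (t-1)
  set w := x ⬝ᵥ V⁻¹ *ᵥ x with hw
  have hw0 : 0 ≤ w := LinHelp.inv_quad_nonneg hVpd x
  have hcs : θd ⬝ᵥ x ≤ Real.sqrt (θd ⬝ᵥ V *ᵥ θd) * Real.sqrt w := LinHelp.cs_conf hVpd θd x
  have hmn : Real.sqrt (θd ⬝ᵥ V *ᵥ θd) = mnorm V θd := rfl
  have hβc : mnorm V θd ≤ Real.sqrt (betaConf d L S R lam (t-1) (1/(t:ℝ)^2)) := hB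
  have hββ : Real.sqrt (betaConf d L S R lam (t-1) (1/(t:ℝ)^2)) ≤
      Real.sqrt (betaT d T L S R lam) :=
    Real.sqrt_le_sqrt (LinHelp.betaConf_le_betaT E.hL E.hS E.hR E.hlam ht1 htT)
  have h2 : a / s < Real.sqrt (betaT d T L S R lam) * Real.sqrt w := by
    calc a / s < θd ⬝ᵥ x := hkey
      _ ≤ Real.sqrt (θd ⬝ᵥ V *ᵥ θd) * Real.sqrt w := hcs
      _ ≤ Real.sqrt (betaT d T L S R lam) * Real.sqrt w := by
          rw [hmn]
          exact mul_le_mul_of_nonneg_right (le_trans hβc hββ) (Real.sqrt_nonneg _)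
  have h3 : a < Real.sqrt (betaT d T L S R lam) * Real.sqrt w * s := by
    rw [div_lt_iff₀ hs] at h2
    exact h2
  have hβ0 : 0 ≤ betaT d T L S R lam := sq_nonneg _
  have hprod : Real.sqrt (betaT d T L S R lam) * Real.sqrt w * s =
      Real.sqrt (betaT d T L S R lam * Real.log T * w) := by
    rw [hsdef, ← Real.sqrt_mul hβ0, ← Real.sqrt_mul (mul_nonneg hβ0 hw0)]
    ring_nf
  have h5 := pow_lt_pow_left₀ h3 ha0 (by norm_num : 2 ≠ 0)
  rw [hprod] at h5
  rwa [Real.sq_sqrt (mul_nonneg (mul_nonneg hβ0 (by linarith : (0:ℝ) ≤ Real.log T)) hw0)] at h5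

end LinIMED2


set_option maxHeartbeats 3000000 in
/-- **Lemma 7: bound on `F₂` for LinIMED-2.** -/
theorem linimed2_F2_bound (L S R lam : ℝ) (hL : 0 < L) (hS : 0 < S) (hR : 0 < R)
    (hlam : 0 < lam) :
    ∃ c : ℝ, 0 < c ∧ ∃ T₀ : ℕ, 2 ≤ T₀ ∧
      ∀ (d T : ℕ) (E : LinIMED2 d T L S R lam), T₀ ≤ T →
        ∀ Γ : ℝ, 0 < Γ → Γ < 1 →
          E.F2 ≤ (T : ℝ) * Γ +
            c * (d * betaT d T L S R lam * Real.log T / Γ) *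
              Real.log (1 + L ^ 2 * betaT d T L S R lam * Real.log T / (lam * Γ ^ 2)) := by
  refine ⟨2 * LinHelp.Cone L R lam, by linarith [LinHelp.Cone_pos hL hR hlam], 3, by norm_num, ?_⟩
  intro d T E hT3 Γ hΓ0 hΓ1
  haveI := E.mΩ
  haveI := E.hP
  set β := betaT d T L S R lam with hβdef
  set lgT := Real.log T with hlgTdef
  have hlgT1 : 1 ≤ lgT := LinIMED2.one_le_logT hT3
  have hβ1 : 1 ≤ β := LinHelp.one_le_betaT hR.le E.hlamS
  have hβd : 2 * R ^ 2 * d * lgT ≤ β :=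
    LinHelp.betaT_ge hL hlam hR.le (le_trans (by norm_num) hT3) (by linarith [E.hlamS])
  have hβlgT1 : (1:ℝ) ≤ β * lgT := by nlinarith
  have hβlgT0 : (0:ℝ) < β * lgT := by linarith
  set C := (T:ℝ) * Γ + 2 * LinHelp.Cone L R lam * ((d:ℝ) * β * lgT / Γ) *
      Real.log (1 + L ^ 2 * β * lgT / (lam * Γ ^ 2)) with hC
  have hpoint : ∀ ω : E.Ω, (∑ t ∈ Finset.Icc 1 T,
      E.gap t ω * Set.indicator (E.Bev t ∩ E.Cev t ∩ (E.Dev t)ᶜ) (fun _ => (1:ℝ)) ω) ≤ C := by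
    intro ω
    classical
    set Bad : Finset ℕ := (Finset.Icc 1 T).filter
        (fun t => ω ∈ E.Bev t ∩ E.Cev t ∩ (E.Dev t)ᶜ ∧ Γ < E.gap t ω) with hBadDef
    set n := Bad.card with hn
    set e : Fin n ↪o ℕ := Bad.orderEmbOfFin rfl with he
    have heBad : ∀ i : Fin n, e i ∈ Bad := fun i => Bad.orderEmbOfFin_mem rfl i
    have heIcc : ∀ i : Fin n, 1 ≤ e i ∧ e i ≤ T := by
      intro i
      have h := heBad i
      rw [hBadDef, Finset.mem_filter, Finset.mem_Icc] at h
      exact h.1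
    have heP : ∀ i : Fin n,
        (ω ∈ E.Bev (e i) ∩ E.Cev (e i) ∩ (E.Dev (e i))ᶜ) ∧ Γ < E.gap (e i) ω := by
      intro i
      have h := heBad i
      rw [hBadDef, Finset.mem_filter] at h
      exact h.2
    set xs : ℕ → Fin d → ℝ :=
      fun j => if h : j < n then E.ctx (e ⟨j, h⟩) (E.act (e ⟨j, h⟩) ω) else 0 with hxs
    have hxsL : ∀ j, xs j ⬝ᵥ xs j ≤ L ^ 2 := by
      intro j
      by_cases h : j < n
      · simp only [hxs, dif_pos h]
        exact E.ctx_act_sq (heIcc ⟨j,h⟩).1 (heIcc ⟨j,h⟩).2 ω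
      · simp only [hxs, dif_neg h]
        have h0 : (0:Fin d → ℝ) ⬝ᵥ (0:Fin d → ℝ) = 0 := by simp
        rw [h0]
        positivity
    have hxse : ∀ i : Fin n, xs (i : ℕ) = E.ctx (e i) (E.act (e i) ω) := by
      intro i
      simp only [hxs, dif_pos i.isLt, Fin.eta]
    set u : ℕ → ℝ := fun j => xs j ⬝ᵥ (LinHelp.gram lam xs j)⁻¹ *ᵥ xs j with hu
    have hu0 : ∀ j, 0 ≤ u j :=
      fun j => LinHelp.inv_quad_nonneg (LinHelp.gram_posdef xs E.hlam j) _
    have hWpsd : ∀ i : Fin n,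
        ((E.Vmat (e i - 1) ω) - LinHelp.gram lam xs (i : ℕ)).PosSemidef := by
      intro i
      set em : ℕ → ℕ := fun j => if h : j < n then (e ⟨j, h⟩ : ℕ) else 0 with hem
      have hemval : ∀ j (hj : j < n), em j = e ⟨j, hj⟩ := by
        intro j hj; simp only [hem, dif_pos hj]
      set Si : Finset ℕ := (Finset.range (i:ℕ)).image em with hSi
      have hinj : ∀ j1 ∈ Finset.range (i:ℕ), ∀ j2 ∈ Finset.range (i:ℕ),
          em j1 = em j2 → j1 = j2 := by
        intro j1 hj1 j2 hj2 hcontra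
        rw [Finset.mem_range] at hj1 hj2
        have hj1n : j1 < n := lt_trans hj1 i.isLt
        have hj2n : j2 < n := lt_trans hj2 i.isLt
        rw [hemval j1 hj1n, hemval j2 hj2n] at hcontra
        have h2 := e.injective hcontra
        exact Fin.mk.inj_iff.mp h2
      have hsum_eq : ∑ j ∈ Finset.range (i:ℕ), vecMulVec (xs j) (xs j)
          = ∑ s ∈ Si, vecMulVec (E.ctx s (E.act s ω)) (E.ctx s (E.act s ω)) := by
        rw [hSi, Finset.sum_image hinj]
        apply Finset.sum_congr rfl
        intro j hj
        have hjn : j < n := lt_trans (Finset.mem_range.mp hj) i.isLt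
        rw [hemval j hjn]
        simp only [hxs, dif_pos hjn]
      have hsub : Si ⊆ Finset.Icc 1 (e i - 1) := by
        intro sN hsN
        rw [hSi, Finset.mem_image] at hsN
        obtain ⟨j, hj, rfl⟩ := hsN
        have hjn : j < n := lt_trans (Finset.mem_range.mp hj) i.isLt
        rw [hemval j hjn, Finset.mem_Icc]
        refine ⟨(heIcc ⟨j, hjn⟩).1, ?_⟩
        have hlt : e ⟨j, hjn⟩ < e i :=
          e.strictMono (Fin.mk_lt_mk.mpr (Finset.mem_range.mp hj))
        omega
      have hdiff : E.Vmat (e i - 1) ω - LinHelp.gram lam xs (i:ℕ)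
          = ∑ s ∈ Finset.Icc 1 (e i - 1) \ Si,
              vecMulVec (E.ctx s (E.act s ω)) (E.ctx s (E.act s ω)) := by
        rw [E.Vmat_eq ω (e i - 1), LinHelp.gram, hsum_eq, ← Finset.sum_sdiff hsub]
        abel
      rw [hdiff]
      exact LinHelp.psd_sum _ _ fun s _ => LinHelp.psd_vecMulVec _
    have hwu : ∀ i : Fin n,
        E.ctx (e i) (E.act (e i) ω) ⬝ᵥ (E.Vmat (e i - 1) ω)⁻¹ *ᵥ E.ctx (e i) (E.act (e i) ω)
          ≤ u (i:ℕ) := by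
      intro i
      have h := LinHelp.inv_quad_antitone (LinHelp.gram_posdef xs E.hlam (i:ℕ))
        (E.Vmat_posdef ω (e i - 1)) (hWpsd i) (E.ctx (e i) (E.act (e i) ω))
      simp only [hu]
      rw [hxse i]
      exact h
    have hcore : ∀ i : Fin n, E.gap (e i) ω ^ 2 < β * lgT *
        (E.ctx (e i) (E.act (e i) ω) ⬝ᵥ (E.Vmat (e i - 1) ω)⁻¹ *ᵥ E.ctx (e i) (E.act (e i) ω)) := by
      intro i
      have h := E.round_core hT3 (heIcc i).1 (heIcc i).2 (heP i).1
      rw [← hβdef, ← hlgTdef] at h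
      exact h
    have hε1 : Γ ^ 2 / (β * lgT) ≤ 1 := by
      rw [div_le_one hβlgT0]; nlinarith
    have hεmin : ∀ i : Fin n, Γ ^ 2 / (β * lgT) ≤ min 1 (u (i:ℕ)) := by
      intro i
      have h1 := hcore i
      have h2 := hwu i
      have hΓg : Γ ^ 2 < E.gap (e i) ω ^ 2 := by
        have h3 := (heP i).2
        nlinarith [E.gap_nonneg' (heIcc i).1 (heIcc i).2 ω]
      have h3 : Γ ^ 2 < β * lgT * u (i:ℕ) := by
        nlinarith [mul_le_mul_of_nonneg_left h2 hβlgT0.le]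
      refine le_min hε1 ?_
      rw [div_le_iff₀ hβlgT0]
      nlinarith
    have hgm : ∀ i : Fin n, E.gap (e i) ω ≤ β * lgT / Γ * min 1 (u (i:ℕ)) := by
      intro i
      have hg1 : E.gap (e i) ω ≤ 1 := E.gap_le_one' (heIcc i).1 (heIcc i).2 ω
      have hg0 : 0 < E.gap (e i) ω := lt_trans hΓ0 (heP i).2
      rcases le_total 1 (u (i:ℕ)) with hc | hc
      · rw [min_eq_left hc, mul_one]
        calc E.gap (e i) ω ≤ 1 := hg1
          _ ≤ β * lgT / Γ := by rw [le_div_iff₀ hΓ0]; nlinarith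
      · rw [min_eq_right hc, div_mul_eq_mul_div, le_div_iff₀ hΓ0]
        have h1 := hcore i
        have h2 := hwu i
        nlinarith [(heP i).2, mul_le_mul_of_nonneg_left h2 hβlgT0.le]
    have hsum_min : ∑ i : Fin n, min 1 (u (i:ℕ)) ≤
        2 * d * Real.log d + 2 * d * Real.log (1 + n * L ^ 2 / lam) := by
      rw [Fin.sum_univ_eq_sum_range (fun j => min 1 (u j)) n]
      exact LinHelp.ellip xs E.hd E.hlam hL.le hxsL n
    have hself : (n:ℝ) * (Γ ^ 2 / (β * lgT)) ≤
        2 * d * Real.log d + 2 * d * Real.log (1 + n * L ^ 2 / lam) := by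
      calc (n:ℝ) * (Γ ^ 2 / (β * lgT)) = ∑ _i : Fin n, Γ ^ 2 / (β * lgT) := by
            rw [Finset.sum_const, Finset.card_univ, Fintype.card_fin, nsmul_eq_mul]
        _ ≤ ∑ i : Fin n, min 1 (u (i:ℕ)) := Finset.sum_le_sum fun i _ => hεmin i
        _ ≤ _ := hsum_min
    have harith := LinHelp.arith L R lam hL hR hlam d n E.hd β lgT Γ hlgT1 hβd hΓ0 hΓ1 hself
    have hBadSum : ∑ t ∈ Bad, E.gap t ω ≤
        β * lgT / Γ * (2 * d * Real.log d + 2 * d * Real.log (1 + n * L ^ 2 / lam)) := by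
      have hbij : ∑ i : Fin n, E.gap (e i) ω = ∑ t ∈ Bad, E.gap t ω := by
        apply Finset.sum_bij (fun (i : Fin n) _ => (e i : ℕ))
        · intro i _; exact heBad i
        · intro i _ j _ hij; exact e.injective hij
        · intro t ht
          have hmem : t ∈ Set.range e := by
            rw [Finset.range_orderEmbOfFin]
            exact ht
          obtain ⟨i, rfl⟩ := hmem
          exact ⟨i, Finset.mem_univ i, rfl⟩
        · intro i _; rfl
      rw [← hbij]
      calc ∑ i : Fin n, E.gap (e i) ω ≤ ∑ i : Fin n, β * lgT / Γ * min 1 (u (i:ℕ)) :=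
            Finset.sum_le_sum fun i _ => hgm i
        _ = β * lgT / Γ * ∑ i : Fin n, min 1 (u (i:ℕ)) := by rw [Finset.mul_sum]
        _ ≤ _ := mul_le_mul_of_nonneg_left hsum_min (div_nonneg hβlgT0.le hΓ0.le)
    have hterm : ∀ t ∈ Finset.Icc 1 T,
        E.gap t ω * Set.indicator (E.Bev t ∩ E.Cev t ∩ (E.Dev t)ᶜ) (fun _ => (1:ℝ)) ω ≤
          Γ + (if t ∈ Bad then E.gap t ω else 0) := by
      intro t ht
      rw [Finset.mem_Icc] at ht
      have hg0 := E.gap_nonneg' ht.1 ht.2 ω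
      have hite0 : 0 ≤ (if t ∈ Bad then E.gap t ω else 0) := by
        split
        · exact hg0
        · exact le_refl 0
      by_cases hev : ω ∈ E.Bev t ∩ E.Cev t ∩ (E.Dev t)ᶜ
      · rw [Set.indicator_of_mem hev, mul_one]
        by_cases hgt : Γ < E.gap t ω
        · have htB : t ∈ Bad := by
            rw [hBadDef, Finset.mem_filter, Finset.mem_Icc]
            exact ⟨ht, hev, hgt⟩
          rw [if_pos htB]
          linarith
        · push_neg at hgt
          linarith
      · rw [Set.indicator_of_notMem hev, mul_zero]
        linarith
    calc ∑ t ∈ Finset.Icc 1 T,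
          E.gap t ω * Set.indicator (E.Bev t ∩ E.Cev t ∩ (E.Dev t)ᶜ) (fun _ => (1:ℝ)) ω
        ≤ ∑ t ∈ Finset.Icc 1 T, (Γ + if t ∈ Bad then E.gap t ω else 0) :=
          Finset.sum_le_sum hterm
      _ = (T:ℝ) * Γ + ∑ t ∈ Bad, E.gap t ω := by
          rw [Finset.sum_add_distrib, Finset.sum_const, Finset.sum_ite_mem,
            Finset.inter_eq_right.mpr (Finset.filter_subset _ _), Nat.card_Icc]
          simp only [Nat.add_sub_cancel, nsmul_eq_mul]
          rfl
      _ ≤ (T:ℝ) * Γ + β * lgT / Γ *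
            (2 * d * Real.log d + 2 * d * Real.log (1 + n * L ^ 2 / lam)) := by
          linarith
      _ ≤ (T:ℝ) * Γ + β * lgT / Γ *
            (2 * LinHelp.Cone L R lam * (d * Real.log (1 + L ^ 2 * β * lgT / (lam * Γ ^ 2)))) := by
          have hco : (0:ℝ) ≤ β * lgT / Γ := div_nonneg hβlgT0.le hΓ0.le
          have := mul_le_mul_of_nonneg_left harith hco
          linarith
      _ = C := by rw [hC]; ring
  have hnn : ∀ ω : E.Ω, 0 ≤ ∑ t ∈ Finset.Icc 1 T,
      E.gap t ω * Set.indicator (E.Bev t ∩ E.Cev t ∩ (E.Dev t)ᶜ) (fun _ => (1:ℝ)) ω := by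
    intro ω
    apply Finset.sum_nonneg
    intro t ht
    rw [Finset.mem_Icc] at ht
    exact mul_nonneg (E.gap_nonneg' ht.1 ht.2 ω)
      (Set.indicator_nonneg (fun _ _ => zero_le_one) ω)
  have hnorm := MeasureTheory.norm_integral_le_of_norm_le_const (μ := E.P)
    (f := fun ω => ∑ t ∈ Finset.Icc 1 T,
      E.gap t ω * Set.indicator (E.Bev t ∩ E.Cev t ∩ (E.Dev t)ᶜ) (fun _ => (1:ℝ)) ω)
    (C := C)
    (Filter.Eventually.of_forall fun ω => by
      rw [Real.norm_eq_abs, abs_of_nonneg (hnn ω)]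
      exact hpoint ω)
  rw [MeasureTheory.probReal_univ, mul_one] at hnorm
  rw [LinIMED2.F2]
  calc (∫ ω, (∑ t ∈ Finset.Icc 1 T,
        E.gap t ω * Set.indicator (E.Bev t ∩ E.Cev t ∩ (E.Dev t)ᶜ) (fun _ => (1:ℝ)) ω) ∂E.P)
      ≤ |∫ ω, (∑ t ∈ Finset.Icc 1 T,
        E.gap t ω * Set.indicator (E.Bev t ∩ E.Cev t ∩ (E.Dev t)ᶜ) (fun _ => (1:ℝ)) ω) ∂E.P| :=
        le_abs_self _
    _ ≤ C := by rw [← Real.norm_eq_abs]; exact hnorm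

end
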